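/- In the Bose representation, let Γ be a transversal plane of the regular 2-spread 𝕊 of PG(8,q), let g be a line of Γ, let π be an F_q-subplane of Γ, and let Π_g = ⟨g, g^q, g^{q^2}⟩ ∩ PG(8,q). Then: (1) in PG(8,q^3), for every point X ∈ Γ, the intersection of the π-scroll-plane ⦅X⦆_π with Π_g* is either empty, a T-point, a T-line, or a T-plane; and (2) in PG(8,q^6), for every point X ∈ Γ☆, the intersection ⦅X⦆_π ∩ Π_g☆ is either empty, a T-point, a T-line, or a T-plane. -/

import Mathlib

/-!
Common set-up: an explicit model of the Bruck-Bose representation of PG(2,q^3) in PG(6,q),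
of the Bose representation of PG(2,q^3) in PG(8,q), and of their cubic and sextic
field extensions.

`Fq`, `F3`, `F6` are the fields of orders `q`, `q^3`, `q^6`.

* PG(2,q^3) is `Projectivization F3 (Fin 3 → F3)`, with line at infinity `z = 0`.
* The ambient 7-dimensional `Fq`-space of PG(6,q) is `V6 = (Fin 2 → F3) × Fq`.
  Its extensions to `F3` and `F6` are modelled blockwise using the Galois splitting
  `F3 ⊗ F3 ≅ F3 × F3 × F3`:  `V63 = (Fin 3 → Fin 2 → F3) × F3` and
  `V66 = (Fin 3 → Fin 2 → F6) × F6`, with the Frobenius collineation acting by a cyclic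
  shift of the blocks composed with coordinatewise q-th powers (`tauBB`).
* The hyperplane at infinity is `{v | v.2 = 0}`; the regular 2-spread consists of
  the planes `{(l•(x,y),0) | l ∈ F3}`, whose extensions meet the transversal lines:
  the transversal line `g^{q^e}` is the set of vectors `gBlockVec e a b`.
* Similarly PG(8,q) has ambient `Fq`-space `Fin 3 → F3` with extensions
  `Fin 3 → Fin 3 → K` (`K = F3, F6`), the Bose spread plane of a point `(x:y:z)` being
  `{l•(x,y,z)}`; the transversal plane `Γ^{q^e}` is the block `e` (`GammaPlane e`),
  and a point `X̄ = (x:y:z)` of PG(2,q^3) corresponds to the point of `Γ` with vector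
  `blockVec 0 ![x,y,z]`.
-/

noncomputable section
open scoped Classical

/-- The projective point `P` is represented, up to a nonzero scalar, by the vector `w`. -/
def pe {K V : Type*} [DivisionRing K] [AddCommGroup V] [Module K V]
    (P : Projectivization K V) (w : V) : Prop :=
  ∃ c : K, c ≠ 0 ∧ P.rep = c • w

/-- `v ↦ B ⬝ v^q`, the vector form of a collineation `X ↦ B X^q`. -/
def cpiVec (q : ℕ) {K : Type*} [Field K] (B : Matrix (Fin 3) (Fin 3) K)
    (v : Fin 3 → K) : Fin 3 → K :=
  B.mulVec fun i => v i ^ q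

/-- `v ↦ D ⬝ v^q` on a line (pairs of coordinates). -/
def cbVec (q : ℕ) {K : Type*} [Field K] (D : Matrix (Fin 2) (Fin 2) K)
    (v : Fin 2 → K) : Fin 2 → K :=
  D.mulVec fun i => v i ^ q

/-- The vector of the Bruck-Bose ambient extension placing the pair `(a,b)` in
Galois block `e` (a vector on the transversal line `g^{q^e}`). -/
def gBlockVec {K : Type*} [Zero K] (e : Fin 3) (a b : K) : (Fin 3 → Fin 2 → K) × K :=
  (fun e' => if e' = e then ![a, b] else 0, 0)

/-- The Frobenius collineation `X ↦ X^q` on (extensions of) the Bruck-Bose ambient space. -/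
def tauBB (q : ℕ) {K : Type*} [Field K] (w : (Fin 3 → Fin 2 → K) × K) :
    (Fin 3 → Fin 2 → K) × K :=
  (fun e k => w.1 (e - 1) k ^ q, w.2 ^ q)

/-- The vector of the Bose ambient extension placing `u` in Galois block `e`. -/
def blockVec {K : Type*} [Zero K] (e : Fin 3) (u : Fin 3 → K) : Fin 3 → Fin 3 → K :=
  fun e' => if e' = e then u else 0

/-- The Frobenius collineation `X ↦ X^q` on (extensions of) the Bose ambient space. -/
def tauBose (q : ℕ) {K : Type*} [Field K] (w : Fin 3 → Fin 3 → K) : Fin 3 → Fin 3 → K :=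
  fun e i => w (e - 1) i ^ q

/-- The transversal plane `Γ^{q^e}` of the Bose spread (as a set of vectors). -/
def GammaPlane {K : Type*} [Zero K] (e : Fin 3) : Set (Fin 3 → Fin 3 → K) :=
  {w | ∀ e', e' ≠ e → w e' = 0}

/-- The scroll plane `⟪X⟫_π = ⟨X, (X^{c_π^5})^q, (X^{c_π^4})^{q^2}⟩` of the point `X ∈ Γ`
(or `Γ^{extension}`) with `Γ`-coordinate vector `u`, where `c_π` is given by the matrix `B`. -/
def scrollSub (q : ℕ) {K : Type*} [Field K] (B : Matrix (Fin 3) (Fin 3) K)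
    (u : Fin 3 → K) : Submodule K (Fin 3 → Fin 3 → K) :=
  Submodule.span K
    {blockVec 0 u,
     blockVec 1 (fun i => ((cpiVec q B)^[5] u) i ^ q),
     blockVec 2 (fun i => ((cpiVec q B)^[4] u) i ^ q ^ 2)}

/-- The `b`-scroll plane `⟪X⟫_b = ⟨X, (X^{c_b^5})^q, (X^{c_b^4})^{q^2}⟩` of the point `X` of
the transversal line `g` (or its extension) with coordinate pair `(a,b)`, where `c_b` is
given by the matrix `D`. -/
def bScrollSub (q : ℕ) {K : Type*} [Field K] (D : Matrix (Fin 2) (Fin 2) K)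
    (a b : K) : Submodule K ((Fin 3 → Fin 2 → K) × K) :=
  Submodule.span K
    {gBlockVec 0 a b,
     gBlockVec 1 (((cbVec q D)^[5] ![a, b]) 0 ^ q) (((cbVec q D)^[5] ![a, b]) 1 ^ q),
     gBlockVec 2 (((cbVec q D)^[4] ![a, b]) 0 ^ q ^ 2) (((cbVec q D)^[4] ![a, b]) 1 ^ q ^ 2)}

/-- `S` is a single point lying on one of the transversal planes (a T-point). -/
def IsTPointSet {K : Type*} [Field K]
    (S : Set (Projectivization K (Fin 3 → Fin 3 → K))) : Prop :=
  ∃ w : Fin 3 → Fin 3 → K, w ≠ 0 ∧ (∃ e, w ∈ GammaPlane e) ∧ S = {P | pe P w}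

/-- `S` is the point set of a T-line: a line meeting two of the transversal planes. -/
def IsTLineSet {K : Type*} [Field K]
    (S : Set (Projectivization K (Fin 3 → Fin 3 → K))) : Prop :=
  ∃ (e e' : Fin 3) (u u' : Fin 3 → Fin 3 → K), e ≠ e' ∧ u ≠ 0 ∧ u' ≠ 0 ∧
    u ∈ GammaPlane e ∧ u' ∈ GammaPlane e' ∧
    S = {P | ∃ s t : K, P.rep = s • u + t • u'}

/-- `S` is the point set of a T-plane: a plane meeting all three transversal planes. -/
def IsTPlaneSet {K : Type*} [Field K]
    (S : Set (Projectivization K (Fin 3 → Fin 3 → K))) : Prop :=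
  ∃ u : Fin 3 → Fin 3 → Fin 3 → K, (∀ e, u e ∈ GammaPlane e) ∧ LinearIndependent K u ∧
    S = {P | P.rep ∈ Submodule.span K (Set.range u)}

/-- `S` is empty, a T-point, a T-line or a T-plane. -/
def TClass {K : Type*} [Field K]
    (S : Set (Projectivization K (Fin 3 → Fin 3 → K))) : Prop :=
  S = ∅ ∨ IsTPointSet S ∨ IsTLineSet S ∨ IsTPlaneSet S

/-- `ζ` : the linear embedding of the (extended) Bruck-Bose ambient space into the
(extended) Bose ambient space, realising PG(6,q) as the 6-space `Σ_{6,q}` of PG(8,q). -/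
def zetaBB {K : Type*} [Field K] (w : (Fin 3 → Fin 2 → K) × K) : Fin 3 → Fin 3 → K :=
  fun e => ![w.1 e 0, w.1 e 1, w.2]

section BruckBose

variable (Fq F3 F6 : Type) [Field Fq] [Field F3] [Field F6]
  [Fintype Fq] [Fintype F3] [Fintype F6]
  [Algebra Fq F3] [Algebra F3 F6] [Algebra Fq F6] [IsScalarTower Fq F3 F6]

/-- The points of `PG(2,q^3)`. -/
abbrev Pt2 := Projectivization F3 (Fin 3 → F3)

/-- The points of the quadratic extension `PG(2,q^6)`. -/
abbrev Pt2e := Projectivization F6 (Fin 3 → F6)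

/-- The line at infinity `ℓ∞` of `PG(2,q^3)`. -/
def linf : Set (Pt2 F3) := {P | P.rep 2 = 0}

/-- The extended line at infinity `ℓ∞⁺⁺` of `PG(2,q^6)`. -/
def linfe : Set (Pt2e F6) := {P | P.rep 2 = 0}

/-- Representing vectors of the image under `M` of the standard `F_q`-subplane. -/
def subplaneVecs (M : Matrix (Fin 3) (Fin 3) F3) : Set (Fin 3 → F3) :=
  {u | ∃ a : Fin 3 → Fq, u = M.mulVec fun i => algebraMap Fq F3 (a i)}

/-- The `F_q`-subplane `π̄` of `PG(2,q^3)` determined by the invertible matrix `M`: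
the image under `M` of the standard rational subplane.  (Every `F_q`-subplane arises
in this way.) -/
def subplaneOf (M : Matrix (Fin 3) (Fin 3) F3) : Set (Pt2 F3) :=
  {P | ∃ u ∈ subplaneVecs Fq F3 M, pe P u}

/-- Representing vectors of the image under `M` of the standard `F_q`-conic. -/
def conicVecs (M : Matrix (Fin 3) (Fin 3) F3) : Set (Fin 3 → F3) :=
  {u | (∃ θ : Fq, u = M.mulVec fun i => algebraMap Fq F3 (![1, θ, θ ^ 2] i)) ∨
    u = M.mulVec ![0, 0, 1]}

/-- The `F_q`-conic `C̄` of `PG(2,q^3)` determined by the invertible matrix `M`: the image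
under `M` of the standard conic of the standard rational subplane.  (Every `F_q`-conic of
an `F_q`-subplane arises this way.) -/
def conicOf (M : Matrix (Fin 3) (Fin 3) F3) : Set (Pt2 F3) :=
  {P | ∃ u ∈ conicVecs Fq F3 M, pe P u}

/-- Representing vectors of `C̄⁺`, the unique `F_{q^3}`-conic containing `C̄ = conicOf M`. -/
def conicPlusVecs (M : Matrix (Fin 3) (Fin 3) F3) : Set (Fin 3 → F3) :=
  {u | (∃ θ : F3, u = M.mulVec ![1, θ, θ ^ 2]) ∨ u = M.mulVec ![0, 0, 1]}

/-- `C̄⁺`, the unique non-degenerate conic of `PG(2,q^3)` containing `C̄ = conicOf M`. -/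
def conicPlusOf (M : Matrix (Fin 3) (Fin 3) F3) : Set (Pt2 F3) :=
  {P | ∃ u ∈ conicPlusVecs F3 M, pe P u}

/-- Representing vectors of `C̄⁺⁺`, the unique conic of `PG(2,q^6)` containing `C̄⁺`. -/
def conicPPVecs (M : Matrix (Fin 3) (Fin 3) F3) : Set (Fin 3 → F6) :=
  {u | (∃ θ : F6, u = (M.map (algebraMap F3 F6)).mulVec ![1, θ, θ ^ 2]) ∨
    u = (M.map (algebraMap F3 F6)).mulVec ![0, 0, 1]}

/-- `C̄⁺⁺`, the unique conic of the quadratic extension `PG(2,q^6)` containing `C̄⁺`. -/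
def conicPPOf (M : Matrix (Fin 3) (Fin 3) F3) : Set (Pt2e F6) :=
  {P | ∃ u ∈ conicPPVecs F3 F6 M, pe P u}

/-- The subplane determined by `M` is secant to `ℓ∞` (meets it in `q+1` points). -/
def SecantSubplane (M : Matrix (Fin 3) (Fin 3) F3) : Prop :=
  (subplaneOf Fq F3 M ∩ linf F3).ncard = Fintype.card Fq + 1

/-- The subplane determined by `M` is tangent to `ℓ∞` (meets it in exactly one point). -/
def TangentSubplane (M : Matrix (Fin 3) (Fin 3) F3) : Prop :=
  (subplaneOf Fq F3 M ∩ linf F3).ncard = 1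

/-- The subplane determined by `M` is exterior to `ℓ∞` (disjoint from it). -/
def ExteriorSubplane (M : Matrix (Fin 3) (Fin 3) F3) : Prop :=
  subplaneOf Fq F3 M ∩ linf F3 = ∅

/-- The collineation `X ↦ B X^q` is a generator of the unique order-3 collineation group of
`PG(2,q^3)` fixing the subplane `subplaneOf M` pointwise (i.e. it is `c̄_π` or `c̄_π²`). -/
def IsCpiGen (M B : Matrix (Fin 3) (Fin 3) F3) : Prop :=
  IsUnit B.det ∧
  (∀ P ∈ subplaneOf Fq F3 M, pe P (cpiVec (Fintype.card Fq) B P.rep)) ∧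
  (∀ P : Pt2 F3, pe P ((cpiVec (Fintype.card Fq) B)^[3] P.rep)) ∧
  (∃ P : Pt2 F3, ¬ pe P (cpiVec (Fintype.card Fq) B P.rep))

/-- The map `X ↦ D X^q` on `ℓ∞` (coordinatised by pairs) is a generator of the unique
order-3 collineation group of `ℓ∞` fixing the `F_q`-subline `b̄ = subplaneOf M ∩ ℓ∞`
pointwise. -/
def IsCbGen (M : Matrix (Fin 3) (Fin 3) F3) (D : Matrix (Fin 2) (Fin 2) F3) : Prop :=
  IsUnit D.det ∧
  (∀ P ∈ subplaneOf Fq F3 M ∩ linf F3,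
    ∃ c : F3, c ≠ 0 ∧
      cbVec (Fintype.card Fq) D ![P.rep 0, P.rep 1] = c • ![P.rep 0, P.rep 1]) ∧
  (∀ u : Fin 2 → F3, u ≠ 0 → ∃ c : F3, c ≠ 0 ∧ (cbVec (Fintype.card Fq) D)^[3] u = c • u) ∧
  (∃ u : Fin 2 → F3, u ≠ 0 ∧ ¬ ∃ c : F3, c ≠ 0 ∧ cbVec (Fintype.card Fq) D u = c • u)

/-- `P' = P^{c̄_π}` where `c̄_π : X ↦ B X^q`. -/
def cptRel (B : Matrix (Fin 3) (Fin 3) F3) (P P' : Pt2 F3) : Prop :=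
  pe P' (cpiVec (Fintype.card Fq) B P.rep)

/-- `E` is one of the two `(π̄,ℓ∞)`-carriers lying on `ℓ∞` (for `π̄` exterior to `ℓ∞`):
`E ∈ ℓ∞` and the image of `E` under `c̄_π` or `c̄_π²` again lies on `ℓ∞`. -/
def IsCarrierOnLinf (B : Matrix (Fin 3) (Fin 3) F3) (E : Pt2 F3) : Prop :=
  E ∈ linf F3 ∧ ∃ E1 : Pt2 F3, cptRel Fq F3 B E E1 ∧ E1 ∈ linf F3

/-! ### The Bruck-Bose ambient spaces -/

/-- The 7-dimensional `Fq`-vector space underlying `PG(6,q)`. -/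
abbrev V6 := (Fin 2 → F3) × Fq

/-- The points of `PG(6,q)`. -/
abbrev Pt6 := Projectivization Fq (V6 Fq F3)

/-- The cubic extension of `V6`, underlying `PG(6,q^3)`. -/
abbrev V63 := (Fin 3 → Fin 2 → F3) × F3

/-- The points of `PG(6,q^3)`. -/
abbrev Pt63 := Projectivization F3 (V63 F3)

/-- The sextic extension of `V6`, underlying `PG(6,q^6)`. -/
abbrev V66 := (Fin 3 → Fin 2 → F6) × F6

/-- The points of `PG(6,q^6)`. -/
abbrev Pt66 := Projectivization F6 (V66 F6)

/-- The hyperplane at infinity `Σ∞` of `PG(6,q)` (as a point set). -/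
def inf6 : Set (Pt6 Fq F3) := {P | P.rep.2 = 0}

/-- The extended hyperplane at infinity `Σ∞^*` in `PG(6,q^3)`. -/
def inf63 : Set (Pt63 F3) := {P | P.rep.2 = 0}

/-- The extended hyperplane at infinity `Σ∞^☆` in `PG(6,q^6)`. -/
def inf66 : Set (Pt66 F6) := {P | P.rep.2 = 0}

/-- The vectors of the spread plane corresponding to the point `(x : y : 0)` of `ℓ∞`. -/
def spreadVecs (x y : F3) : Set (V6 Fq F3) := {v | ∃ l : F3, v = (![l * x, l * y], 0)}

/-- The points of the plane `[P]` of the regular 2-spread `S` corresponding to the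
point `P̄ = (x : y : 0)` of `ℓ∞`. -/
def spreadPts (x y : F3) : Set (Pt6 Fq F3) := {P | P.rep ∈ spreadVecs Fq F3 x y}

/-- `s` is (the point set of) a plane of the regular 2-spread `S`. -/
def IsSpreadPlane (s : Set (Pt6 Fq F3)) : Prop :=
  ∃ x y : F3, ¬(x = 0 ∧ y = 0) ∧ s = spreadPts Fq F3 x y

/-- The embedding of `V6` into its cubic extension `V63`. -/
def iota6 (v : V6 Fq F3) : V63 F3 :=
  (fun e k => v.1 k ^ Fintype.card Fq ^ (e : ℕ), algebraMap Fq F3 v.2)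

/-- The embedding of `V6` into its sextic extension `V66`. -/
def iota66 (v : V6 Fq F3) : V66 F6 :=
  (fun e k => algebraMap F3 F6 (v.1 k ^ Fintype.card Fq ^ (e : ℕ)), algebraMap Fq F6 v.2)

/-- The embedding of `V63` into `V66`. -/
def kappa6 (w : V63 F3) : V66 F6 :=
  (fun e k => algebraMap F3 F6 (w.1 e k), algebraMap F3 F6 w.2)

/-- A representing vector of `P^{q^e}` where `P` is the point of the transversal line `g`
with coordinate pair `(a,b) ∈ F_{q^3}²`. -/
def gOrbitVec3 (a b : F3) (e : Fin 3) : V63 F3 :=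
  gBlockVec e (a ^ Fintype.card Fq ^ (e : ℕ)) (b ^ Fintype.card Fq ^ (e : ℕ))

/-- A representing vector of `P^{q^e}` where `P` is the point of the extended transversal
line `g^☆` with coordinate pair `(a,b) ∈ F_{q^6}²`. -/
def gOrbitVec6 (a b : F6) (e : ℕ) : V66 F6 :=
  gBlockVec (Fin.ofNat 3 e) (a ^ Fintype.card Fq ^ e) (b ^ Fintype.card Fq ^ e)

/-- The vectors of the extension to `PG(6,q^3)` of the spread plane of `(x : y : 0)`. -/
def extSpreadVecs3 (x y : F3) : Set (V63 F3) :=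
  {w | ∃ c : Fin 3 → F3, w = (fun e =>
    ![c e * x ^ Fintype.card Fq ^ (e : ℕ), c e * y ^ Fintype.card Fq ^ (e : ℕ)], 0)}

/-- The vectors of the extension to `PG(6,q^6)` of the spread plane of `(x : y : 0)`. -/
def extSpreadVecs6 (x y : F3) : Set (V66 F6) :=
  {w | ∃ c : Fin 3 → F6, w = (fun e =>
    ![c e * algebraMap F3 F6 (x ^ Fintype.card Fq ^ (e : ℕ)),
      c e * algebraMap F3 F6 (y ^ Fintype.card Fq ^ (e : ℕ))], 0)}

/-- The point set in `PG(6,q)` of the `k`-dimensional normal rational curve with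
parametrising vectors `v 0, …, v k`:  `{(1,θ,…,θ^k)} ∪ {(0,…,0,1)}` in the frame `v`. -/
def nrcPts6 {k : ℕ} (v : Fin (k + 1) → V6 Fq F3) : Set (Pt6 Fq F3) :=
  {P | (∃ θ : Fq, pe P (∑ i : Fin (k + 1), θ ^ (i : ℕ) • v i)) ∨ pe P (v (Fin.last k))}

/-- The point set in `PG(6,q^3)` of the extension of the normal rational curve `v`. -/
def nrcPts63 {k : ℕ} (v : Fin (k + 1) → V6 Fq F3) : Set (Pt63 F3) :=
  {P | (∃ θ : F3, pe P (∑ i : Fin (k + 1), θ ^ (i : ℕ) • iota6 Fq F3 (v i))) ∨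
    pe P (iota6 Fq F3 (v (Fin.last k)))}

/-- The point set in `PG(6,q^6)` of the extension of the normal rational curve `v`. -/
def nrcPts66 {k : ℕ} (v : Fin (k + 1) → V6 Fq F3) : Set (Pt66 F6) :=
  {P | (∃ θ : F6, pe P (∑ i : Fin (k + 1), θ ^ (i : ℕ) • iota66 Fq F3 F6 (v i))) ∨
    pe P (iota66 Fq F3 F6 (v (Fin.last k)))}

/-- `N` is a `k`-dimensional normal rational curve of `PG(6,q)`. -/
def IsNRC (k : ℕ) (N : Set (Pt6 Fq F3)) : Prop :=
  ∃ v : Fin (k + 1) → V6 Fq F3, LinearIndependent Fq v ∧ N = nrcPts6 Fq F3 v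

/-- The exact-at-infinity Bruck-Bose representation `[C]` of a point set `C` of
`PG(2,q^3)`: affine points go to affine points, and a point of `ℓ∞` goes to the whole
corresponding spread plane. -/
def bbExact (C : Set (Pt2 F3)) : Set (Pt6 Fq F3) :=
  {Q | ∃ P ∈ C, (∃ x y : F3, pe P ![x, y, 1] ∧ pe Q (![x, y], (1 : Fq))) ∨
    (∃ x y : F3, pe P ![x, y, 0] ∧ Q ∈ spreadPts Fq F3 x y)}

/-- `N` is the Bruck-Bose representation (usual convention: linear components at infinity
ignored) of the point set `C` of `PG(2,q^3)`: `N` is contained in the exact-at-infinity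
representation of `C` and contains all of its affine points. -/
def corrBB (C : Set (Pt2 F3)) (N : Set (Pt6 Fq F3)) : Prop :=
  N ⊆ bbExact Fq F3 C ∧ ∀ Q ∈ bbExact Fq F3 C, Q ∉ inf6 Fq F3 → Q ∈ N

/-! ### The Bose ambient spaces -/

/-- The points of `PG(8,q^3)`. -/
abbrev Pt93 := Projectivization F3 (Fin 3 → Fin 3 → F3)

/-- The points of `PG(8,q^6)`. -/
abbrev Pt96 := Projectivization F6 (Fin 3 → Fin 3 → F6)

/-- The vectors of `Π_g^* = ⟨g, g^q, g^{q^2}⟩` in `PG(8,q^3)`, where `g` is the line of the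
transversal plane `Γ` corresponding to the line `l` of `PG(2,q^3)`. -/
def PiG3 (l : Submodule F3 (Fin 3 → F3)) : Set (Fin 3 → Fin 3 → F3) :=
  {w | ∀ e : Fin 3, ∃ v ∈ l, w e = fun i => v i ^ Fintype.card Fq ^ (e : ℕ)}

/-- The vectors of `Π_g^☆` in `PG(8,q^6)`. -/
def PiG6 (l : Submodule F3 (Fin 3 → F3)) : Set (Fin 3 → Fin 3 → F6) :=
  {w | ∀ e : Fin 3, w e ∈ Submodule.span F6
    {u : Fin 3 → F6 | ∃ v ∈ l, u = fun i => algebraMap F3 F6 (v i) ^ Fintype.card Fq ^ (e : ℕ)}}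

/-- The extension to `PG(2,q^6)` of the line `l` of `PG(2,q^3)`. -/
def extLineF6 (l : Submodule F3 (Fin 3 → F3)) : Submodule F6 (Fin 3 → F6) :=
  Submodule.span F6 {u | ∃ v ∈ l, u = fun i => algebraMap F3 F6 (v i)}

/-- The vectors of the point set of `V(⟦C⟧)^*` in `PG(8,q^3)` for the `F_q`-conic of `M`:
the union of the `π`-scroll planes of the points of `C⁺` (with `c_π` given by `B`). -/
def boseVar3 (M B : Matrix (Fin 3) (Fin 3) F3) : Set (Fin 3 → Fin 3 → F3) :=
  {w | ∃ u ∈ conicPlusVecs F3 M, w ∈ scrollSub (Fintype.card Fq) B u}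

/-- The vectors of the point set of `V(⟦C⟧)^☆` in `PG(8,q^6)`: the union of the
`π`-scroll planes of the points of `C⁺⁺`. -/
def boseVar6 (M B : Matrix (Fin 3) (Fin 3) F3) : Set (Fin 3 → Fin 3 → F6) :=
  {w | ∃ u ∈ conicPPVecs F3 F6 M,
    w ∈ scrollSub (Fintype.card Fq) (B.map (algebraMap F3 F6)) u}

/-- The point set of the variety-extension `V([C])^*` in `PG(6,q^3)`:
`V(⟦C⟧)^* ∩ Σ_{6,q}^*`, transported to the Bruck-Bose model via `ζ`. -/
def bbVar3 (M B : Matrix (Fin 3) (Fin 3) F3) : Set (Pt63 F3) :=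
  {P | zetaBB P.rep ∈ boseVar3 Fq F3 M B}

/-- The point set of the variety-extension `V([C])^☆` in `PG(6,q^6)`. -/
def bbVar6 (M B : Matrix (Fin 3) (Fin 3) F3) : Set (Pt66 F6) :=
  {P | zetaBB P.rep ∈ boseVar6 Fq F3 F6 M B}

/-- `L` is a T-line of `Σ∞^*`: a line meeting two of the transversal lines `g,g^q,g^{q^2}`
of the regular 2-spread. -/
def IsTLineBB (L : Submodule F3 (V63 F3)) : Prop :=
  ∃ (e e' : Fin 3) (a b a' b' : F3), e ≠ e' ∧ ¬(a = 0 ∧ b = 0) ∧ ¬(a' = 0 ∧ b' = 0) ∧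
    L = Submodule.span F3 {gBlockVec e a b, gBlockVec e' a' b'}

/-- The T-line `h^{q^e}` where `h = E (E^{c_π})^{q^2}`, `E` (resp. `E^{c_π}`) being the point
of the transversal `g` with coordinate pair `(a,b)` (resp. `(a',b')`). -/
def hLine (a b a' b' : F3) (e : Fin 3) : Submodule F3 (V63 F3) :=
  Submodule.span F3
    {gBlockVec e (a ^ Fintype.card Fq ^ (e : ℕ)) (b ^ Fintype.card Fq ^ (e : ℕ)),
     gBlockVec (e + 2) (a' ^ Fintype.card Fq ^ ((e : ℕ) + 2))
       (b' ^ Fintype.card Fq ^ ((e : ℕ) + 2))}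

/-! ### 3-special normal rational curves -/

/-- The pair `(a,b) ∈ F_{q^6}²` is proportional to an `F_{q^3}`-rational pair, i.e. the
corresponding point of the extended transversal line `g^☆` lies on `g`. -/
def rationalPair (a b : F6) : Prop :=
  ∃ (a0 b0 : F3) (c : F6), c ≠ 0 ∧ a = c * algebraMap F3 F6 a0 ∧ b = c * algebraMap F3 F6 b0

/-- The weight `w(P)` of a point `P` of `PG(5,q^6)` (given by a representing vector `w`):
1 if `P` is on an extended transversal line of the spread, 2 if not but `P` is on a line
meeting two of the extended transversal lines, 3 otherwise. -/
def weightV (w : V66 F6) : ℕ :=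
  if ∃ (e : Fin 3) (a b : F6), w = gBlockVec e a b then 1
  else if ∃ (e e' : Fin 3) (a b a' b' s t : F6), e ≠ e' ∧
      w = s • gBlockVec e a b + t • gBlockVec e' a' b' then 2
  else 3

/-- The orbit size `o(P)` of the point with representing vector `w` under the Frobenius
collineation `X ↦ X^q`. -/
def orbitSizeV (w : V66 F6) : ℕ :=
  Set.ncard {Q : Pt66 F6 | ∃ n : ℕ, pe Q ((tauBB (Fintype.card Fq))^[n] w)}

/-- `s(P) = 1` if `P` lies in an extended plane of the spread `S`, else `s(P) = 2`. -/
def sValV (w : V66 F6) : ℕ :=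
  if ∃ x y : F3, ¬(x = 0 ∧ y = 0) ∧ w ∈ extSpreadVecs6 Fq F3 F6 x y then 1 else 2

/-- The point of `PG(5,q^6)` with representing vector `w` is `S`-happy:
`w(P) ⬝ o(P) = 3 s(P)`. -/
def HappyV (w : V66 F6) : Prop :=
  weightV F6 w * orbitSizeV Fq F6 w = 3 * sValV Fq F3 F6 w

/-- The polynomial whose homogeneous roots give the points at infinity of the normal
rational curve parametrised by `v` (the last coordinates of the frame). -/
def infPoly {k : ℕ} (v : Fin (k + 1) → V6 Fq F3) : Polynomial Fq :=
  ∑ i : Fin (k + 1), Polynomial.C (v i).2 * Polynomial.X ^ (i : ℕ)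

/-- The parametrised normal rational curve `v` is 3-special with respect to the regular
2-spread `S`: it is not contained in `Σ∞`, all its points at infinity (with multiplicity,
including the point at the infinite parameter value) are defined over `F_{q^6}` and are
`S`-happy, and their weights sum to 6. -/
def Is3SpecialData {k : ℕ} (v : Fin (k + 1) → V6 Fq F3) : Prop :=
  infPoly Fq F3 v ≠ 0 ∧
  ((infPoly Fq F3 v).map (algebraMap Fq F6)).roots.card =
    ((infPoly Fq F3 v).map (algebraMap Fq F6)).natDegree ∧
  (∀ θ ∈ ((infPoly Fq F3 v).map (algebraMap Fq F6)).roots,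
    HappyV Fq F3 F6 (∑ i : Fin (k + 1), θ ^ (i : ℕ) • iota66 Fq F3 F6 (v i))) ∧
  (((infPoly Fq F3 v).map (algebraMap Fq F6)).natDegree < k →
    HappyV Fq F3 F6 (iota66 Fq F3 F6 (v (Fin.last k)))) ∧
  (((infPoly Fq F3 v).map (algebraMap Fq F6)).roots.map fun θ =>
      weightV F6 (∑ i : Fin (k + 1), θ ^ (i : ℕ) • iota66 Fq F3 F6 (v i))).sum +
    (k - ((infPoly Fq F3 v).map (algebraMap Fq F6)).natDegree) *
      weightV F6 (iota66 Fq F3 F6 (v (Fin.last k))) = 6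

/-- `N` is a 3-special `k`-dimensional normal rational curve of `PG(6,q)` with respect to
the regular 2-spread `S`. -/
def Is3Special (k : ℕ) (N : Set (Pt6 Fq F3)) : Prop :=
  ∃ v : Fin (k + 1) → V6 Fq F3, LinearIndependent Fq v ∧ N = nrcPts6 Fq F3 v ∧
    Is3SpecialData Fq F3 F6 v

end BruckBose

section General
variable {K : Type*} [Field K]

lemma blockVec_ne_zero {u : Fin 3 → K} (hu : u ≠ 0) (e : Fin 3) :
    blockVec e u ≠ 0 := by
  intro h
  apply hu
  have := congrFun h e
  simpa [blockVec] using this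

lemma blockVec_mem_Gamma (e : Fin 3) (u : Fin 3 → K) :
    blockVec e u ∈ GammaPlane e := by
  intro e' he'
  simp [blockVec, he']

lemma mem_span_triple {V : Type*} [AddCommGroup V] [Module K V] (x y z w : V) :
    w ∈ Submodule.span K {x, y, z} ↔ ∃ a b c : K, w = a • x + b • y + c • z := by
  constructor
  · intro hw
    rw [Submodule.mem_span_insert] at hw
    obtain ⟨a, w1, hw1, rfl⟩ := hw
    rw [Submodule.mem_span_insert] at hw1
    obtain ⟨b, w2, hw2, rfl⟩ := hw1
    rw [Submodule.mem_span_singleton] at hw2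
    obtain ⟨c, rfl⟩ := hw2
    exact ⟨a, b, c, by abel⟩
  · rintro ⟨a, b, c, rfl⟩
    refine Submodule.add_mem _ (Submodule.add_mem _ ?_ ?_) ?_ <;>
      exact Submodule.smul_mem _ _ (Submodule.subset_span (by simp))

lemma triple_apply (g : Fin 3 → Fin 3 → K) (a b c : K) (e : Fin 3) :
    (a • blockVec 0 (g 0) + b • blockVec 1 (g 1) + c • blockVec 2 (g 2)) e
      = (![a, b, c] e) • g e := by
  fin_cases e <;> simp [blockVec]

theorem tclass_general (g : Fin 3 → Fin 3 → K) (hg : ∀ e, g e ≠ 0)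
    (C : Fin 3 → (Fin 3 → K) → Prop) (hC0 : ∀ e, C e 0)
    (hCs : ∀ (e : Fin 3) (c : K) (x : Fin 3 → K), c ≠ 0 → (C e (c • x) ↔ C e x)) :
    TClass {P : Projectivization K (Fin 3 → Fin 3 → K) |
      P.rep ∈ Submodule.span K
        {blockVec 0 (g 0), blockVec 1 (g 1), blockVec 2 (g 2)} ∧
      ∀ e, C e (P.rep e)} := by
  classical
  set b : Fin 3 → Fin 3 → Fin 3 → K := fun e => blockVec e (g e) with hb
  have hcond : ∀ (e : Fin 3) (a : K), C e (a • g e) ↔ (a = 0 ∨ C e (g e)) := by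
    intro e a
    by_cases h : a = 0
    · simp [h, hC0 e]
    · rw [hCs e a _ h]
      simp [h]
  have hchar : ∀ P : Projectivization K (Fin 3 → Fin 3 → K),
      (P.rep ∈ Submodule.span K
          {blockVec 0 (g 0), blockVec 1 (g 1), blockVec 2 (g 2)} ∧
        ∀ e, C e (P.rep e)) ↔
      ∃ a₀ a₁ a₂ : K, P.rep = a₀ • b 0 + a₁ • b 1 + a₂ • b 2 ∧
        (a₀ = 0 ∨ C 0 (g 0)) ∧ (a₁ = 0 ∨ C 1 (g 1)) ∧ (a₂ = 0 ∨ C 2 (g 2)) := by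
    intro P
    rw [mem_span_triple]
    constructor
    · rintro ⟨⟨a₀, a₁, a₂, hrep⟩, hc⟩
      refine ⟨a₀, a₁, a₂, hrep, ?_, ?_, ?_⟩
      · have := hc 0; rw [hrep, triple_apply, hcond] at this; simpa using this
      · have := hc 1; rw [hrep, triple_apply, hcond] at this; simpa using this
      · have := hc 2; rw [hrep, triple_apply, hcond] at this; simpa using this
    · rintro ⟨a₀, a₁, a₂, hrep, h0, h1, h2⟩
      refine ⟨⟨a₀, a₁, a₂, hrep⟩, ?_⟩
      intro e
      rw [hrep, triple_apply, hcond]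
      fin_cases e
      · simpa using h0
      · simpa using h1
      · simpa using h2
  have hset : {P : Projectivization K (Fin 3 → Fin 3 → K) |
      P.rep ∈ Submodule.span K
        {blockVec 0 (g 0), blockVec 1 (g 1), blockVec 2 (g 2)} ∧
      ∀ e, C e (P.rep e)} =
      {P : Projectivization K (Fin 3 → Fin 3 → K) |
        ∃ a₀ a₁ a₂ : K, P.rep = a₀ • b 0 + a₁ • b 1 + a₂ • b 2 ∧
          (a₀ = 0 ∨ C 0 (g 0)) ∧ (a₁ = 0 ∨ C 1 (g 1)) ∧ (a₂ = 0 ∨ C 2 (g 2))} :=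
    Set.ext fun P => hchar P
  rw [TClass, hset]
  have hmemG : ∀ e, b e ∈ GammaPlane e := fun e => blockVec_mem_Gamma e (g e)
  have hbne : ∀ e, b e ≠ 0 := fun e => blockVec_ne_zero (hg e) e
  by_cases q0 : C 0 (g 0) <;> by_cases q1 : C 1 (g 1) <;> by_cases q2 : C 2 (g 2)
  -- TTT : T-plane
  · right; right; right
    refine ⟨b, hmemG, ?_, ?_⟩
    · rw [Fintype.linearIndependent_iff]
      intro cc hsum i
      have hs3 : cc 0 • b 0 + cc 1 • b 1 + cc 2 • b 2 = 0 := by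
        simpa [Fin.sum_univ_three] using hsum
      have h2 : (![cc 0, cc 1, cc 2] i) • g i = 0 := by
        rw [← triple_apply g (cc 0) (cc 1) (cc 2) i]
        exact congrFun hs3 i
      have h3 : ![cc 0, cc 1, cc 2] i = 0 := (smul_eq_zero.1 h2).resolve_right (hg i)
      fin_cases i <;> simpa using h3
    · ext P
      simp only [Set.mem_setOf_eq]
      have hr : Set.range b = {b 0, b 1, b 2} := by
        ext w
        constructor
        · rintro ⟨e, rfl⟩; fin_cases e <;> simp
        · rintro (rfl | rfl | rfl) <;> exact ⟨_, rfl⟩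
      rw [hr, mem_span_triple]
      constructor
      · rintro ⟨a₀, a₁, a₂, hrep, -⟩; exact ⟨a₀, a₁, a₂, hrep⟩
      · rintro ⟨a₀, a₁, a₂, hrep⟩
        exact ⟨a₀, a₁, a₂, hrep, Or.inr q0, Or.inr q1, Or.inr q2⟩
  -- TTF : T-line through blocks 0,1
  · right; right; left
    refine ⟨0, 1, b 0, b 1, by decide, hbne 0, hbne 1, hmemG 0, hmemG 1, ?_⟩
    ext P
    simp only [Set.mem_setOf_eq]
    constructor
    · rintro ⟨a₀, a₁, a₂, hrep, h0, h1, h2⟩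
      rw [h2.resolve_right q2] at hrep
      exact ⟨a₀, a₁, by simpa using hrep⟩
    · rintro ⟨s, t, hrep⟩
      exact ⟨s, t, 0, by simpa using hrep, Or.inr q0, Or.inr q1, Or.inl rfl⟩
  -- TFT : T-line through blocks 0,2
  · right; right; left
    refine ⟨0, 2, b 0, b 2, by decide, hbne 0, hbne 2, hmemG 0, hmemG 2, ?_⟩
    ext P
    simp only [Set.mem_setOf_eq]
    constructor
    · rintro ⟨a₀, a₁, a₂, hrep, h0, h1, h2⟩
      rw [h1.resolve_right q1] at hrep
      exact ⟨a₀, a₂, by simpa using hrep⟩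
    · rintro ⟨s, t, hrep⟩
      exact ⟨s, 0, t, by simpa using hrep, Or.inr q0, Or.inl rfl, Or.inr q2⟩
  -- TFF : T-point in block 0
  · right; left
    refine ⟨b 0, hbne 0, ⟨0, hmemG 0⟩, ?_⟩
    ext P
    simp only [Set.mem_setOf_eq, pe]
    constructor
    · rintro ⟨a₀, a₁, a₂, hrep, h0, h1, h2⟩
      rw [h1.resolve_right q1, h2.resolve_right q2] at hrep
      simp only [zero_smul, add_zero] at hrep
      refine ⟨a₀, ?_, hrep⟩
      rintro rfl
      rw [zero_smul] at hrep
      exact P.rep_nonzero hrep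
    · rintro ⟨c, hc, hrep⟩
      exact ⟨c, 0, 0, by simpa using hrep, Or.inr q0, Or.inl rfl, Or.inl rfl⟩
  -- FTT : T-line through blocks 1,2
  · right; right; left
    refine ⟨1, 2, b 1, b 2, by decide, hbne 1, hbne 2, hmemG 1, hmemG 2, ?_⟩
    ext P
    simp only [Set.mem_setOf_eq]
    constructor
    · rintro ⟨a₀, a₁, a₂, hrep, h0, h1, h2⟩
      rw [h0.resolve_right q0] at hrep
      exact ⟨a₁, a₂, by simpa using hrep⟩
    · rintro ⟨s, t, hrep⟩
      exact ⟨0, s, t, by simpa using hrep, Or.inl rfl, Or.inr q1, Or.inr q2⟩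
  -- FTF : T-point in block 1
  · right; left
    refine ⟨b 1, hbne 1, ⟨1, hmemG 1⟩, ?_⟩
    ext P
    simp only [Set.mem_setOf_eq, pe]
    constructor
    · rintro ⟨a₀, a₁, a₂, hrep, h0, h1, h2⟩
      rw [h0.resolve_right q0, h2.resolve_right q2] at hrep
      simp only [zero_smul, add_zero, zero_add] at hrep
      refine ⟨a₁, ?_, hrep⟩
      rintro rfl
      rw [zero_smul] at hrep
      exact P.rep_nonzero hrep
    · rintro ⟨c, hc, hrep⟩
      exact ⟨0, c, 0, by simpa using hrep, Or.inl rfl, Or.inr q1, Or.inl rfl⟩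
  -- FFT : T-point in block 2
  · right; left
    refine ⟨b 2, hbne 2, ⟨2, hmemG 2⟩, ?_⟩
    ext P
    simp only [Set.mem_setOf_eq, pe]
    constructor
    · rintro ⟨a₀, a₁, a₂, hrep, h0, h1, h2⟩
      rw [h0.resolve_right q0, h1.resolve_right q1] at hrep
      simp only [zero_smul, add_zero, zero_add] at hrep
      refine ⟨a₂, ?_, hrep⟩
      rintro rfl
      rw [zero_smul] at hrep
      exact P.rep_nonzero hrep
    · rintro ⟨c, hc, hrep⟩
      exact ⟨0, 0, c, by simpa using hrep, Or.inl rfl, Or.inl rfl, Or.inr q2⟩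
  -- FFF : empty
  · left
    ext P
    simp only [Set.mem_setOf_eq, Set.mem_empty_iff_false, iff_false]
    rintro ⟨a₀, a₁, a₂, hrep, h0, h1, h2⟩
    rw [h0.resolve_right q0, h1.resolve_right q1, h2.resolve_right q2] at hrep
    simp only [zero_smul, add_zero] at hrep
    exact P.rep_nonzero hrep

end General

section ApplyAux
variable {K : Type*} [Field K]

lemma mulVec_ne_zero' {B : Matrix (Fin 3) (Fin 3) K} (hB : IsUnit B.det)
    {v : Fin 3 → K} (hv : v ≠ 0) : B.mulVec v ≠ 0 := by
  intro h
  apply hv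
  have hInv := B.invertibleOfIsUnitDet hB
  calc v = (⅟B * B).mulVec v := by rw [invOf_mul_self, Matrix.one_mulVec]
    _ = (⅟B).mulVec (B.mulVec v) := (Matrix.mulVec_mulVec v (⅟B) B).symm
    _ = 0 := by rw [h, Matrix.mulVec_zero]

lemma powvec_ne_zero {v : Fin 3 → K} (hv : v ≠ 0) (N : ℕ) :
    (fun i => v i ^ N) ≠ 0 := by
  obtain ⟨i, hi⟩ := Function.ne_iff.1 hv
  intro h
  exact pow_ne_zero N hi (congrFun h i)

lemma cpiVec_iter_ne_zero (q : ℕ) {B : Matrix (Fin 3) (Fin 3) K} (hB : IsUnit B.det)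
    {v : Fin 3 → K} (hv : v ≠ 0) (n : ℕ) : (cpiVec q B)^[n] v ≠ 0 := by
  induction n with
  | zero => simpa using hv
  | succ n ih =>
    rw [Function.iterate_succ_apply']
    exact mulVec_ne_zero' hB (powvec_ne_zero ih q)

end ApplyAux

/-- Lemma 3.3: for a line `g` of the transversal plane `Γ` (given by a
line `l` of PG(2,q³)) and an `F_q`-subplane `π` of `Γ` (given by `M`, with `c_π` given
by `B`), every `π`-scroll plane meets `Π_g^*` (resp. `Π_g^☆`) in ∅, a T-point, a T-line
or a T-plane. -/
theorem scroll_plane_meets_PiG (Fq F3 F6 : Type) [Field Fq] [Field F3] [Field F6]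
    [Fintype Fq] [Fintype F3] [Fintype F6]
    [Algebra Fq F3] [Algebra F3 F6] [Algebra Fq F6] [IsScalarTower Fq F3 F6]
    (h3 : Fintype.card F3 = Fintype.card Fq ^ 3)
    (h6 : Fintype.card F6 = Fintype.card Fq ^ 6)
    (M B : Matrix (Fin 3) (Fin 3) F3) (hM : IsUnit M.det) (hB : IsCpiGen Fq F3 M B)
    (l : Submodule F3 (Fin 3 → F3)) (hl : Module.finrank F3 l = 2) :
    (∀ u : Fin 3 → F3, u ≠ 0 →
      TClass {P : Pt93 F3 | P.rep ∈ scrollSub (Fintype.card Fq) B u ∧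
        P.rep ∈ PiG3 Fq F3 l}) ∧
    (∀ u : Fin 3 → F6, u ≠ 0 →
      TClass {P : Pt96 F6 |
        P.rep ∈ scrollSub (Fintype.card Fq) (B.map (algebraMap F3 F6)) u ∧
        P.rep ∈ PiG6 Fq F3 F6 l}) := by
  classical
  set q := Fintype.card Fq with hq
  have hq0 : q ≠ 0 := Fintype.card_ne_zero
  constructor
  · intro u hu
    have hBu : IsUnit B.det := hB.1
    have hg : ∀ e : Fin 3,
        (![u, fun i => ((cpiVec q B)^[5] u) i ^ q,
            fun i => ((cpiVec q B)^[4] u) i ^ q ^ 2] : Fin 3 → Fin 3 → F3) e ≠ 0 := by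
      intro e
      fin_cases e
      · exact hu
      · exact powvec_ne_zero (cpiVec_iter_ne_zero q hBu hu 5) q
      · exact powvec_ne_zero (cpiVec_iter_ne_zero q hBu hu 4) (q ^ 2)
    have hC0 : ∀ e : Fin 3,
        (fun (e : Fin 3) (x : Fin 3 → F3) =>
          ∃ v ∈ l, x = fun i => v i ^ q ^ (e : ℕ)) e 0 := by
      intro e
      exact ⟨0, l.zero_mem, by funext i; simp [zero_pow (pow_ne_zero (e : ℕ) hq0)]⟩
    have hroot : ∀ (e : Fin 3) (c : F3), (c ^ q ^ (3 - (e : ℕ))) ^ q ^ (e : ℕ) = c := by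
      intro e c
      rw [← pow_mul, ← pow_add, Nat.sub_add_cancel e.2.le, ← h3]
      exact FiniteField.pow_card c
    have hfwd : ∀ (e : Fin 3) (c : F3) (x : Fin 3 → F3),
        (∃ v ∈ l, x = fun i => v i ^ q ^ (e : ℕ)) →
        (∃ v ∈ l, c • x = fun i => v i ^ q ^ (e : ℕ)) := by
      rintro e c x ⟨v, hv, rfl⟩
      refine ⟨(c ^ q ^ (3 - (e : ℕ))) • v, l.smul_mem _ hv, ?_⟩
      funext i
      simp [mul_pow, hroot e c]
    have hCs : ∀ (e : Fin 3) (c : F3) (x : Fin 3 → F3), c ≠ 0 →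
        ((∃ v ∈ l, c • x = fun i => v i ^ q ^ (e : ℕ)) ↔
          (∃ v ∈ l, x = fun i => v i ^ q ^ (e : ℕ))) := by
      intro e c x hc
      constructor
      · intro h
        have h2 := hfwd e c⁻¹ _ h
        rwa [inv_smul_smul₀ hc] at h2
      · exact hfwd e c x
    exact tclass_general
      ![u, fun i => ((cpiVec q B)^[5] u) i ^ q,
        fun i => ((cpiVec q B)^[4] u) i ^ q ^ 2] hg
      (fun (e : Fin 3) (x : Fin 3 → F3) => ∃ v ∈ l, x = fun i => v i ^ q ^ (e : ℕ))
      hC0 hCs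
  · intro u hu
    have hBu : IsUnit (B.map (algebraMap F3 F6)).det := by
      have := (RingHom.map_det (algebraMap F3 F6) B).symm
      rw [RingHom.mapMatrix_apply] at this
      rw [this]
      exact hB.1.map (algebraMap F3 F6)
    have hg : ∀ e : Fin 3,
        (![u, fun i => ((cpiVec q (B.map (algebraMap F3 F6)))^[5] u) i ^ q,
            fun i => ((cpiVec q (B.map (algebraMap F3 F6)))^[4] u) i ^ q ^ 2] :
          Fin 3 → Fin 3 → F6) e ≠ 0 := by
      intro e
      fin_cases e
      · exact hu
      · exact powvec_ne_zero (cpiVec_iter_ne_zero q hBu hu 5) q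
      · exact powvec_ne_zero (cpiVec_iter_ne_zero q hBu hu 4) (q ^ 2)
    have hC0 : ∀ e : Fin 3, (0 : Fin 3 → F6) ∈ Submodule.span F6
        {w : Fin 3 → F6 | ∃ v ∈ l, w = fun i =>
          algebraMap F3 F6 (v i) ^ Fintype.card Fq ^ (e : ℕ)} :=
      fun e => Submodule.zero_mem _
    have hCs : ∀ (e : Fin 3) (c : F6) (x : Fin 3 → F6), c ≠ 0 →
        ((c • x ∈ Submodule.span F6
            {w : Fin 3 → F6 | ∃ v ∈ l, w = fun i =>
              algebraMap F3 F6 (v i) ^ Fintype.card Fq ^ (e : ℕ)}) ↔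
          x ∈ Submodule.span F6
            {w : Fin 3 → F6 | ∃ v ∈ l, w = fun i =>
              algebraMap F3 F6 (v i) ^ Fintype.card Fq ^ (e : ℕ)}) :=
      fun e c x hc => Submodule.smul_mem_iff _ hc
    exact tclass_general
      ![u, fun i => ((cpiVec q (B.map (algebraMap F3 F6)))^[5] u) i ^ q,
        fun i => ((cpiVec q (B.map (algebraMap F3 F6)))^[4] u) i ^ q ^ 2] hg
      (fun (e : Fin 3) (x : Fin 3 → F6) => x ∈ Submodule.span F6
        {w : Fin 3 → F6 | ∃ v ∈ l, w = fun i =>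
          algebraMap F3 F6 (v i) ^ Fintype.card Fq ^ (e : ℕ)})
      hC0 hCs
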